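/- Let A be a block lower triangular matrix of the form A = [[C, 0, 0], [0, M, 0], [Θ_C, Θ_M, Θ]] where C is idempotent (C² = C), M^t converges to a limit M* as t → ∞, and the spectral radius of Θ is strictly less than 1. Then A^t converges as t → ∞ to [[C, 0, 0], [0, M*, 0], [(I−Θ)^{-1}Θ_C C, (I−Θ)^{-1}Θ_M M*, 0]]. -/

import Mathlib

open Filter Matrix Finset Polynomial
open scoped NNReal ENNReal

section Aux

attribute [local instance] Matrix.linftyOpNormedRing Matrix.linftyOpNormedAlgebra
  Matrix.linftyOpNormedAddCommGroup

lemma root_of_spectrum {c : ℕ} (A : Matrix (Fin c) (Fin c) ℂ) (μ : ℂ) (h : μ ∈ spectrum ℂ A) :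
    A.charpoly.IsRoot μ := by
  rw [spectrum.mem_iff] at h
  rw [Matrix.isUnit_iff_isUnit_det, isUnit_iff_ne_zero, not_not] at h
  have : ((algebraMap ℂ (Matrix (Fin c) (Fin c) ℂ)) μ - A) = (charmatrix A).map (eval μ) := by
    ext i j
    by_cases hij : i = j
    · subst hij; simp [charmatrix_apply_eq, Matrix.algebraMap_matrix_apply]
    · simp [charmatrix_apply_ne _ _ _ hij, Matrix.algebraMap_matrix_apply, hij]
  unfold Polynomial.IsRoot
  rw [Matrix.charpoly, ← coe_evalRingHom, RingHom.map_det]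
  rw [this] at h
  convert h using 2
  rfl

lemma norm_map_ofReal {m n : Type*} [Fintype m] [Fintype n] (M : Matrix m n ℝ) :
    ‖M.map Complex.ofReal‖ = ‖M‖ := by
  rw [Matrix.linfty_opNorm_def, Matrix.linfty_opNorm_def]
  congr 1
  congr 1
  ext i
  congr 1
  ext j
  simp

lemma geom_bound {c : ℕ} (Θ : Matrix (Fin c) (Fin c) ℝ)
    (hΘ : ∀ μ : ℂ, (Θ.map Complex.ofReal).charpoly.IsRoot μ → ‖μ‖ < 1) :
    ∃ r K : ℝ, 0 < r ∧ r < 1 ∧ 0 < K ∧ ∀ n, ‖Θ ^ n‖ ≤ K * r ^ n := by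
  rcases Nat.eq_zero_or_pos c with hc | hc
  · subst hc
    refine ⟨1/2, 1, by norm_num, by norm_num, by norm_num, fun n => ?_⟩
    have : (Θ ^ n) = 0 := Subsingleton.elim _ _
    rw [this, norm_zero]
    positivity
  haveI : Nonempty (Fin c) := ⟨⟨0, hc⟩⟩
  set Θc := Θ.map Complex.ofReal with hΘc
  have hpow : ∀ n, Θc ^ n = (Θ ^ n).map Complex.ofReal := by
    intro n
    have := map_pow (Complex.ofRealHom.mapMatrix : Matrix (Fin c) (Fin c) ℝ →+* _) Θ n
    simp only [RingHom.mapMatrix_apply] at this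
    exact this.symm
  have hspec : ∀ z ∈ spectrum ℂ Θc, ‖z‖₊ < 1 := by
    intro z hz
    have h1 := hΘ z (root_of_spectrum _ _ hz)
    exact_mod_cast h1
  have hρ : spectralRadius ℂ Θc < (1 : ℝ≥0) := spectrum.spectralRadius_lt_of_forall_lt _ hspec
  obtain ⟨r, hρr, hr1⟩ := ENNReal.lt_iff_exists_nnreal_btwn.mp (by simpa using hρ)
  have hgel := spectrum.pow_nnnorm_pow_one_div_tendsto_nhds_spectralRadius Θc
  have hev : ∀ᶠ n : ℕ in atTop, (‖Θc ^ n‖₊ : ℝ≥0∞) ^ (1/(n:ℝ)) < r :=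
    hgel.eventually_lt_const hρr
  have hrpos : (0:ℝ) < r := by
    rcases eq_or_lt_of_le (zero_le : (0:ℝ≥0) ≤ r) with h | h
    · exfalso; rw [← h] at hρr; simp at hρr
    · exact_mod_cast h
  have hrlt1 : (r : ℝ) < 1 := by exact_mod_cast hr1
  obtain ⟨N, hN⟩ := eventually_atTop.mp hev
  have key : ∀ n, N ≤ n → 1 ≤ n → ‖Θ ^ n‖ ≤ (r:ℝ) ^ n := by
    intro n hn hn1
    have h1 := hN n hn
    have hne : (n : ℝ) ≠ 0 := by positivity
    have h2 : ((‖Θc ^ n‖₊ : ℝ≥0∞) ^ (1/(n:ℝ))) ^ (n:ℝ) < (r : ℝ≥0∞) ^ (n:ℝ) :=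
      ENNReal.rpow_lt_rpow h1 (by positivity)
    rw [← ENNReal.rpow_mul, one_div_mul_cancel hne, ENNReal.rpow_one] at h2
    rw [ENNReal.rpow_natCast] at h2
    rw [← ENNReal.coe_pow, ENNReal.coe_lt_coe, ← NNReal.coe_lt_coe] at h2
    rw [coe_nnnorm] at h2
    push_cast at h2
    calc ‖Θ ^ n‖ = ‖Θc ^ n‖ := by rw [hpow]; rw [norm_map_ofReal]
    _ ≤ (r:ℝ)^n := h2.le
  have hsum0 : 0 ≤ ∑ m ∈ range (N+1), ‖Θ ^ m‖ / (r:ℝ) ^ m :=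
    Finset.sum_nonneg fun m _ => by positivity
  set K : ℝ := 1 + ∑ m ∈ range (N+1), ‖Θ ^ m‖ / (r:ℝ) ^ m with hK
  have hK1 : 1 ≤ K := by rw [hK]; linarith
  refine ⟨r, K, hrpos, hrlt1, by linarith, fun n => ?_⟩
  rcases lt_or_ge n (N+1) with h | h
  · have h1 : ‖Θ ^ n‖ / (r:ℝ)^n ≤ ∑ m ∈ range (N+1), ‖Θ ^ m‖ / (r:ℝ) ^ m :=
      Finset.single_le_sum (f := fun m => ‖Θ ^ m‖ / (r:ℝ)^m)
        (fun m _ => by positivity) (Finset.mem_range.mpr h)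
    have h2 : ‖Θ ^ n‖ / (r:ℝ)^n ≤ K := by rw [hK]; linarith
    have hrn : (0:ℝ) < (r:ℝ)^n := by positivity
    calc ‖Θ ^ n‖ = (‖Θ ^ n‖ / (r:ℝ)^n) * (r:ℝ)^n := by field_simp
    _ ≤ K * (r:ℝ)^n := by gcongr
  · have := key n (by omega) (by omega)
    calc ‖Θ ^ n‖ ≤ (r:ℝ)^n := this
    _ = 1 * (r:ℝ)^n := (one_mul _).symm
    _ ≤ K * (r:ℝ)^n := by have := pow_pos hrpos n; gcongr

variable {q p : Type*} [Fintype q] [Fintype p] [DecidableEq q] [DecidableEq p]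

lemma conv_lemma (Θ : Matrix q q ℝ) (L : Matrix q p ℝ) (B Bstar : Matrix p p ℝ)
    (r K : ℝ) (hr0 : 0 < r) (hr1 : r < 1) (hK : 0 < K)
    (hgeom : ∀ n, ‖Θ ^ n‖ ≤ K * r ^ n)
    (hB : Tendsto (fun n => B ^ n) atTop (nhds Bstar)) :
    Tendsto (fun n => ∑ k ∈ range n, Θ ^ k * L * B ^ (n - 1 - k)) atTop
      (nhds ((1 - Θ)⁻¹ * L * Bstar)) ∧
    Tendsto (fun n => Θ ^ n) atTop (nhds 0) := by
  have hsummable : Summable (fun k => Θ ^ k) := by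
    apply Summable.of_norm
    exact Summable.of_nonneg_of_le (fun n => norm_nonneg _) hgeom
      ((summable_geometric_of_lt_one hr0.le hr1).mul_left K)
  set S := ∑' k, Θ ^ k with hSdef
  have hS : HasSum (fun k => Θ ^ k) S := hsummable.hasSum
  have hθ0 : Tendsto (fun n => Θ ^ n) atTop (nhds (0 : Matrix q q ℝ)) := by
    apply squeeze_zero_norm hgeom
    simpa using (tendsto_pow_atTop_nhds_zero_of_lt_one hr0.le hr1).const_mul K
  have hShift : HasSum (fun k => Θ ^ (k + 1)) (S - 1) := by
    have := (hasSum_nat_add_iff' (f := fun k => Θ ^ k) 1).mpr hS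
    simpa using this
  have hθS : Θ * S = S - 1 := by
    have h1 : HasSum (fun k => Θ ^ (k + 1)) (Θ * S) := by
      have := hS.mul_left Θ
      simpa [← pow_succ'] using this
    exact h1.unique hShift
  have hSθ : S * Θ = S - 1 := by
    have h1 : HasSum (fun k => Θ ^ (k + 1)) (S * Θ) := by
      have := hS.mul_right Θ
      simpa [← pow_succ] using this
    exact h1.unique hShift
  have hleft : (1 - Θ) * S = 1 := by
    rw [sub_mul, one_mul, hθS, sub_sub_cancel]
  have hinv : (1 - Θ)⁻¹ = S := Matrix.inv_eq_right_inv hleft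
  -- bound on powers of B
  obtain ⟨Bb, hBb⟩ := (hB.norm.bddAbove_range)
  simp only [upperBounds, Set.mem_range, Set.mem_setOf_eq] at hBb
  have hBb' : ∀ m, ‖B ^ m‖ ≤ Bb := fun m => hBb ⟨m, rfl⟩
  have hBb0 : 0 ≤ Bb := le_trans (norm_nonneg _) (hBb' 0)
  set f : ℕ → ℕ → Matrix q p ℝ := fun n k => if k < n then Θ ^ k * L * B ^ (n - 1 - k) else 0
    with hfdef
  have hf : ∀ n k, f n k = if k < n then Θ ^ k * L * B ^ (n - 1 - k) else 0 := fun n k => rfl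
  have h_bound : ∀ n k, ‖f n k‖ ≤ K * r ^ k * (‖L‖ * Bb) := by
    intro n k
    rw [hf]
    by_cases h : k < n
    · rw [if_pos h]
      have e1 : ‖Θ ^ k * L * B ^ (n - 1 - k)‖ ≤ ‖Θ ^ k‖ * ‖L‖ * ‖B ^ (n - 1 - k)‖ :=
        le_trans (Matrix.linfty_opNorm_mul _ _)
          (mul_le_mul_of_nonneg_right (Matrix.linfty_opNorm_mul _ _) (norm_nonneg _))
      have e2 : ‖Θ ^ k‖ * ‖L‖ * ‖B ^ (n - 1 - k)‖ ≤ (K * r ^ k) * ‖L‖ * Bb := by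
        exact mul_le_mul (mul_le_mul_of_nonneg_right (hgeom k) (norm_nonneg _)) (hBb' _)
          (norm_nonneg _) (by positivity)
      calc ‖Θ ^ k * L * B ^ (n - 1 - k)‖ ≤ (K * r ^ k) * ‖L‖ * Bb := le_trans e1 e2
        _ = K * r ^ k * (‖L‖ * Bb) := by ring
    · rw [if_neg h, norm_zero]
      positivity
  have h_sum : Summable (fun k => K * r ^ k * (‖L‖ * Bb)) :=
    ((summable_geometric_of_lt_one hr0.le hr1).mul_left K).mul_right _
  have h_lim : ∀ k, Tendsto (fun n => f n k) atTop (nhds (Θ ^ k * L * Bstar)) := by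
    intro k
    have h1 : Tendsto (fun n : ℕ => n - 1 - k) atTop atTop :=
      (tendsto_sub_atTop_nat k).comp (tendsto_sub_atTop_nat 1)
    have h2 : Tendsto (fun n : ℕ => B ^ (n - 1 - k)) atTop (nhds Bstar) := hB.comp h1
    have hg : Continuous (fun X : Matrix p p ℝ => Θ ^ k * L * X) :=
      continuous_const.matrix_mul continuous_id
    have h3 : Tendsto (fun n : ℕ => Θ ^ k * L * B ^ (n - 1 - k)) atTop
        (nhds (Θ ^ k * L * Bstar)) := (hg.tendsto Bstar).comp h2
    apply h3.congr'
    filter_upwards [eventually_ge_atTop (k + 1)] with n hn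
    rw [hf, if_pos (by omega : k < n)]
  letI := Matrix.linftyOpNormedSpace (R := ℝ) (m := q) (n := p) (α := ℝ)
  haveI : CompleteSpace (Matrix q p ℝ) := FiniteDimensional.complete ℝ (Matrix q p ℝ)
  have htan := tendsto_tsum_of_dominated_convergence h_sum h_lim
    (Eventually.of_forall h_bound)
  have hfs : ∀ n, (∑' k, f n k) = ∑ k ∈ range n, Θ ^ k * L * B ^ (n - 1 - k) := by
    intro n
    rw [tsum_eq_sum (s := range n)
      (fun k hk => by rw [hf, if_neg (by simpa using Finset.mem_range.not.mp hk)])]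
    exact Finset.sum_congr rfl fun k hk => by
      rw [hf, if_pos (Finset.mem_range.mp hk)]
  have hlimsum : (∑' k, Θ ^ k * L * Bstar) = (1 - Θ)⁻¹ * L * Bstar := by
    have φcont : Continuous (fun X : Matrix q q ℝ => X * (L * Bstar)) :=
      (continuous_id.matrix_mul continuous_const)
    have hmap : HasSum (fun k => Θ ^ k * (L * Bstar)) (S * (L * Bstar)) :=
      hS.map (AddMonoidHom.mk' (fun X : Matrix q q ℝ => X * (L * Bstar))
        (fun X Y => by exact Matrix.add_mul X Y (L * Bstar))) φcont
    have := hmap.tsum_eq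
    simp only [← Matrix.mul_assoc] at this
    rw [this, hinv, Matrix.mul_assoc]
  constructor
  · rw [← hlimsum]
    exact htan.congr fun n => hfs n
  · exact hθ0

lemma pow_blockTriangular {p q : Type*} [Fintype p] [Fintype q] [DecidableEq p] [DecidableEq q]
    (B : Matrix p p ℝ) (L : Matrix q p ℝ) (D : Matrix q q ℝ) (n : ℕ) :
    (fromBlocks B 0 L D) ^ n =
      fromBlocks (B ^ n) 0 (∑ k ∈ range n, D ^ k * L * B ^ (n - 1 - k)) (D ^ n) := by
  induction n with
  | zero => simp [Matrix.fromBlocks_one]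
  | succ n ih =>
    rw [pow_succ, ih, Matrix.fromBlocks_multiply]
    have hll : (∑ k ∈ range n, D ^ k * L * B ^ (n - 1 - k)) * B + D ^ n * L
        = ∑ k ∈ range (n + 1), D ^ k * L * B ^ (n + 1 - 1 - k) := by
      rw [Finset.sum_range_succ, Matrix.sum_mul]
      congr 1
      · refine Finset.sum_congr rfl fun k hk => ?_
        rw [Matrix.mul_assoc, ← pow_succ]
        have h2 : n - 1 - k + 1 = n + 1 - 1 - k := by
          have := Finset.mem_range.mp hk; omega
        rw [h2]
      · simp
    simp only [Matrix.zero_mul, Matrix.mul_zero, add_zero, zero_add, ← pow_succ, hll]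

lemma pow_blockDiag {p q : Type*} [Fintype p] [Fintype q] [DecidableEq p] [DecidableEq q]
    (B : Matrix p p ℝ) (D : Matrix q q ℝ) (n : ℕ) :
    (fromBlocks B 0 0 D) ^ n = fromBlocks (B ^ n) 0 0 (D ^ n) := by
  rw [pow_blockTriangular]
  have : (∑ k ∈ range n, D ^ k * (0 : Matrix q p ℝ) * B ^ (n - 1 - k)) = 0 :=
    Finset.sum_eq_zero fun k _ => by rw [Matrix.mul_zero, Matrix.zero_mul]
  rw [this]


/-- For a block lower triangular matrix
`A = [[C, 0, 0], [0, M, 0], [Θ_C, Θ_M, Θ]]` with `C` idempotent, `M ^ t → M*`,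
and the spectral radius of `Θ` strictly less than `1` (every complex eigenvalue
of `Θ` has modulus `< 1`), the powers `A ^ t` converge entrywise to
`[[C, 0, 0], [0, M*, 0], [(I − Θ)⁻¹ Θ_C C, (I − Θ)⁻¹ Θ_M M*, 0]]`. -/
theorem stmt3 {a b c : ℕ}
    (C : Matrix (Fin a) (Fin a) ℝ) (M Mstar : Matrix (Fin b) (Fin b) ℝ)
    (ΘC : Matrix (Fin c) (Fin a) ℝ) (ΘM : Matrix (Fin c) (Fin b) ℝ)
    (Θ : Matrix (Fin c) (Fin c) ℝ)
    (hC : C * C = C)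
    (hM : ∀ i j, Tendsto (fun t => (M ^ t) i j) atTop (nhds (Mstar i j)))
    (hΘ : ∀ μ : ℂ, (Θ.map Complex.ofReal).charpoly.IsRoot μ → ‖μ‖ < 1) :
    ∀ i j, Tendsto
      (fun t => ((Matrix.fromBlocks (Matrix.fromBlocks C 0 0 M) 0
        (Matrix.of fun k => Sum.elim (ΘC k) (ΘM k)) Θ) ^ t) i j) atTop
      (nhds ((Matrix.fromBlocks (Matrix.fromBlocks C 0 0 Mstar) 0
        (Matrix.of fun k => Sum.elim (((1 - Θ)⁻¹ * ΘC * C) k)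
          (((1 - Θ)⁻¹ * ΘM * Mstar) k)) 0) i j)) := by
  classical
  set B : Matrix (Fin a ⊕ Fin b) (Fin a ⊕ Fin b) ℝ := fromBlocks C 0 0 M with hBdef
  set Bstar : Matrix (Fin a ⊕ Fin b) (Fin a ⊕ Fin b) ℝ := fromBlocks C 0 0 Mstar with hBstardef
  set L : Matrix (Fin c) (Fin a ⊕ Fin b) ℝ := Matrix.of fun k => Sum.elim (ΘC k) (ΘM k) with hLdef
  have hCpow : ∀ n, 1 ≤ n → C ^ n = C := by
    intro n hn
    induction n with
    | zero => omega
    | succ m ih =>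
      rcases Nat.eq_zero_or_pos m with h | h
      · subst h; rw [pow_one]
      · rw [pow_succ, ih h, hC]
  have hBn : ∀ n, B ^ n = fromBlocks (C ^ n) 0 0 (M ^ n) := fun n => pow_blockDiag C M n
  have hBtend : Tendsto (fun n => B ^ n) atTop (nhds Bstar) := by
    refine tendsto_pi_nhds.mpr fun i => tendsto_pi_nhds.mpr fun j => ?_
    cases i with
    | inl ii =>
      cases j with
      | inl jj =>
        have : Bstar (Sum.inl ii) (Sum.inl jj) = C ii jj := rfl
        rw [this]
        apply tendsto_const_nhds.congr'
        filter_upwards [eventually_ge_atTop 1] with n hn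
        rw [hBn n]
        show C ii jj = (C ^ n) ii jj
        rw [hCpow n hn]
      | inr jj =>
        have : Bstar (Sum.inl ii) (Sum.inr jj) = 0 := rfl
        rw [this]
        apply tendsto_const_nhds.congr (fun n => ?_)
        rw [hBn n]
        rfl
    | inr ii =>
      cases j with
      | inl jj =>
        have : Bstar (Sum.inr ii) (Sum.inl jj) = 0 := rfl
        rw [this]
        apply tendsto_const_nhds.congr (fun n => ?_)
        rw [hBn n]
        rfl
      | inr jj =>
        have : Bstar (Sum.inr ii) (Sum.inr jj) = Mstar ii jj := rfl
        rw [this]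
        refine (hM ii jj).congr fun n => ?_
        rw [hBn n]
        rfl
  obtain ⟨r, K, hr0, hr1, hK, hgeom⟩ := geom_bound Θ hΘ
  obtain ⟨hconv, hθ0⟩ := conv_lemma Θ L B Bstar r K hr0 hr1 hK hgeom hBtend
  have hT : (Matrix.of fun k => Sum.elim (((1 - Θ)⁻¹ * ΘC * C) k)
      (((1 - Θ)⁻¹ * ΘM * Mstar) k)) = (1 - Θ)⁻¹ * L * Bstar := by
    ext k x
    cases x with
    | inl j =>
      show ((1 - Θ)⁻¹ * ΘC * C) k j = ((1 - Θ)⁻¹ * L * Bstar) k (Sum.inl j)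
      simp only [Matrix.mul_apply, hBstardef, hLdef, Fintype.sum_sum_type,
        Matrix.fromBlocks_apply₁₁, Matrix.fromBlocks_apply₂₁, Matrix.of_apply,
        Sum.elim_inl, Sum.elim_inr, Matrix.zero_apply, mul_zero, Finset.sum_const_zero,
        add_zero, zero_mul]
    | inr j =>
      show ((1 - Θ)⁻¹ * ΘM * Mstar) k j = ((1 - Θ)⁻¹ * L * Bstar) k (Sum.inr j)
      simp only [Matrix.mul_apply, hBstardef, hLdef, Fintype.sum_sum_type,
        Matrix.fromBlocks_apply₁₂, Matrix.fromBlocks_apply₂₂, Matrix.of_apply,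
        Sum.elim_inl, Sum.elim_inr, Matrix.zero_apply, mul_zero, Finset.sum_const_zero,
        zero_add, zero_mul]
  have hA : ∀ t, (fromBlocks B 0 L Θ) ^ t =
      fromBlocks (B ^ t) 0 (∑ k ∈ range t, Θ ^ k * L * B ^ (t - 1 - k)) (Θ ^ t) :=
    fun t => pow_blockTriangular B L Θ t
  intro i j
  rw [hT]
  cases i with
  | inl ii =>
    cases j with
    | inl jj =>
      refine ((tendsto_pi_nhds.mp (tendsto_pi_nhds.mp hBtend ii) jj)).congr fun t => ?_
      rw [hA t]
      rfl
    | inr jj =>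
      apply tendsto_const_nhds.congr (fun t => ?_)
      rw [hA t]
      rfl
  | inr ii =>
    cases j with
    | inl jj =>
      refine ((tendsto_pi_nhds.mp (tendsto_pi_nhds.mp hconv ii) jj)).congr fun t => ?_
      rw [hA t]
      rfl
    | inr jj =>
      refine ((tendsto_pi_nhds.mp (tendsto_pi_nhds.mp hθ0 ii) jj)).congr fun t => ?_
      rw [hA t]
      rfl

end Aux
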